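/- Let N ≥ 2 and let 2 ≤ i ≤ N. For any two vertices x, y of the hypercube graph H_N with Hamming distance h(x,y) = i − 2, the number of walks of length i from x to y equals Σ_{k=0}^{i−2} C(i−2, k) · k! · (N − (i−2−k)) · (i−k−1)!, and this quantity is at least i!. -/

import Mathlib

/-- The hypercube graph `H_N` on vertex set `{0,1}^N`: two binary strings are
adjacent iff their Hamming distance equals 1. -/
def hypercube (N : ℕ) : SimpleGraph (Fin N → Bool) where
  Adj x y := hammingDist x y = 1
  symm := by
    constructor
    intro x y h
    simpa [hammingDist_comm] using h
  loopless := by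
    constructor
    intro x h
    simp [hammingDist_self] at h

instance (N : ℕ) : DecidableRel (hypercube N).Adj := fun x y =>
  inferInstanceAs (Decidable (hammingDist x y = 1))

open Finset

namespace HCaux

variable {N : ℕ}

def flip (x : Fin N → Bool) (c : Fin N) : Fin N → Bool := Function.update x c (!(x c))

lemma hd_card (x y : Fin N → Bool) :
    hammingDist x y = (univ.filter (fun d => x d ≠ y d)).card := rfl

lemma flip_apply_self (x : Fin N → Bool) (c : Fin N) : flip x c c = !(x c) := by
  simp [flip]

lemma flip_apply_ne (x : Fin N → Bool) {c d : Fin N} (h : d ≠ c) : flip x c d = x d := by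
  simp [flip, Function.update_of_ne h]

lemma filter_flip_ne (x y : Fin N → Bool) {c : Fin N} (h : x c ≠ y c) :
    univ.filter (fun d => flip x c d ≠ y d) = (univ.filter (fun d => x d ≠ y d)).erase c := by
  ext d
  by_cases hd : d = c
  · subst hd
    simp [flip_apply_self]
    revert h; cases x d <;> cases y d <;> simp
  · simp [flip_apply_ne x hd, hd]

lemma filter_flip_eq (x y : Fin N → Bool) {c : Fin N} (h : x c = y c) :
    univ.filter (fun d => flip x c d ≠ y d) = insert c (univ.filter (fun d => x d ≠ y d)) := by
  ext d
  by_cases hd : d = c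
  · subst hd
    simp [flip_apply_self, h]
  · simp [flip_apply_ne x hd, hd]

lemma dist_flip_mem (x y : Fin N → Bool) {c : Fin N} (h : x c ≠ y c) :
    hammingDist (flip x c) y + 1 = hammingDist x y := by
  rw [hd_card, hd_card, filter_flip_ne x y h]
  rw [Finset.card_erase_of_mem (by simpa using h)]
  have : 0 < (univ.filter (fun d => x d ≠ y d)).card :=
    Finset.card_pos.2 ⟨c, by simpa using h⟩
  omega

lemma dist_flip_not_mem (x y : Fin N → Bool) {c : Fin N} (h : x c = y c) :
    hammingDist (flip x c) y = hammingDist x y + 1 := by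
  rw [hd_card, hd_card, filter_flip_eq x y h]
  rw [Finset.card_insert_of_notMem (by simp [h])]

lemma sum_neighbors (x : Fin N → Bool) (f : (Fin N → Bool) → ℕ) :
    ∑ z ∈ (hypercube N).neighborFinset x, f z = ∑ c : Fin N, f (flip x c) := by
  refine (Finset.sum_bij (fun c _ => flip x c) ?_ ?_ ?_ ?_).symm
  · intro c _
    rw [SimpleGraph.mem_neighborFinset]
    show hammingDist x (flip x c) = 1
    rw [hd_card]
    rw [show (univ.filter (fun d => x d ≠ flip x c d)) = {c} from ?_]
    · simp
    ext d
    by_cases hd : d = c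
    · subst hd; simp [flip_apply_self]
    · simp [flip_apply_ne x hd, hd]
  · intro a _ b _ hab
    replace hab : flip x a = flip x b := hab
    by_contra hne
    have h1 : flip x a a = !(x a) := flip_apply_self x a
    have h2 : flip x b a = x a := flip_apply_ne x hne
    rw [hab] at h1
    rw [h1] at h2
    cases x a <;> simp_all
  · intro z hz
    rw [SimpleGraph.mem_neighborFinset] at hz
    have hz' : (univ.filter (fun d => x d ≠ z d)).card = 1 := hz
    obtain ⟨c, hc⟩ := Finset.card_eq_one.1 hz'
    refine ⟨c, Finset.mem_univ c, ?_⟩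
    show flip x c = z
    funext d
    by_cases hd : d = c
    · subst hd
      have : x d ≠ z d := by
        have : d ∈ univ.filter (fun e => x e ≠ z e) := hc ▸ Finset.mem_singleton_self d
        simpa using this
      rw [flip_apply_self]
      revert this
      cases x d <;> cases z d <;> simp
    · have : d ∉ univ.filter (fun e => x e ≠ z e) := by rw [hc]; simpa using hd
      have : ¬ (x d ≠ z d) := by simpa using this
      rw [flip_apply_ne x hd]
      tauto
  · intro c _; rfl

lemma pow_succ_apply (n : ℕ) (x y : Fin N → Bool) :
    ((SimpleGraph.adjMatrix ℕ (hypercube N)) ^ (n + 1)) x y =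
      ∑ c : Fin N, ((SimpleGraph.adjMatrix ℕ (hypercube N)) ^ n) (flip x c) y := by
  rw [pow_succ', SimpleGraph.adjMatrix_mul_apply, sum_neighbors]

lemma L0 : ∀ (n : ℕ) (x y : Fin N → Bool), n < hammingDist x y →
    ((SimpleGraph.adjMatrix ℕ (hypercube N)) ^ n) x y = 0 := by
  intro n
  induction n with
  | zero =>
    intro x y h
    have : x ≠ y := by
      intro he; subst he; simp [hammingDist_self] at h
    simp [Matrix.one_apply, this]
  | succ n ih =>
    intro x y h
    rw [pow_succ_apply]
    refine Finset.sum_eq_zero fun c _ => ih _ _ ?_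
    by_cases hc : x c = y c
    · rw [dist_flip_not_mem x y hc]; omega
    · have := dist_flip_mem x y hc; omega

lemma L1 : ∀ (n : ℕ) (x y : Fin N → Bool), hammingDist x y = n →
    ((SimpleGraph.adjMatrix ℕ (hypercube N)) ^ n) x y = n.factorial := by
  intro n
  induction n with
  | zero =>
    intro x y h
    have : x = y := hammingDist_eq_zero.1 h
    simp [this, Matrix.one_apply]
  | succ n ih =>
    intro x y h
    rw [pow_succ_apply]
    rw [← Finset.sum_filter_add_sum_filter_not univ (fun c => x c ≠ y c)]
    have h1 : ∀ c ∈ univ.filter (fun c => x c ≠ y c),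
        ((SimpleGraph.adjMatrix ℕ (hypercube N)) ^ n) (flip x c) y = n.factorial := by
      intro c hc
      have hc' : x c ≠ y c := by simpa using hc
      have := dist_flip_mem x y hc'
      exact ih _ _ (by omega)
    have h2 : ∀ c ∈ univ.filter (fun c => ¬ x c ≠ y c),
        ((SimpleGraph.adjMatrix ℕ (hypercube N)) ^ n) (flip x c) y = 0 := by
      intro c hc
      have hc' : x c = y c := by simpa using hc
      refine L0 _ _ _ ?_
      rw [dist_flip_not_mem x y hc']; omega
    rw [Finset.sum_congr rfl h1, Finset.sum_congr rfl h2]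
    rw [Finset.sum_const, Finset.sum_const]
    rw [← hd_card, h]
    simp [Nat.factorial_succ, Nat.mul_comm]

def V (N m : ℕ) : ℕ := ∑ k ∈ Finset.range (m + 1), (m + 1 - k) * (N - (m - k))

lemma V_succ (m : ℕ) : V N (m + 1) = V N m + (m + 2) * (N - (m + 1)) := by
  rw [V, Finset.sum_range_succ']
  congr 1
  refine Finset.sum_congr rfl fun k _ => ?_
  congr 1 <;> omega

lemma card_not_filter (x y : Fin N → Bool) :
    (univ.filter (fun c => ¬ x c ≠ y c)).card = N - hammingDist x y := by
  have := Finset.card_filter_add_card_filter_not (s := (univ : Finset (Fin N)))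
    (p := fun c => x c ≠ y c)
  rw [hd_card]
  simp only [Finset.card_univ, Fintype.card_fin] at this ⊢
  omega

lemma main_eq : ∀ (m : ℕ) (x y : Fin N → Bool), m + 2 ≤ N → hammingDist x y = m →
    ((SimpleGraph.adjMatrix ℕ (hypercube N)) ^ (m + 2)) x y = m.factorial * V N m := by
  intro m
  induction m with
  | zero =>
    intro x y _ h
    have : x = y := hammingDist_eq_zero.1 h
    subst this
    rw [pow_succ_apply]
    have : ∀ c : Fin N, ((SimpleGraph.adjMatrix ℕ (hypercube N)) ^ 1) (flip x c) x = 1 := by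
      intro c
      refine L1 1 _ _ ?_
      rw [dist_flip_not_mem x x (c := c) rfl, hammingDist_self]
    rw [Finset.sum_congr rfl (fun c _ => this c)]
    simp [V]
  | succ m ih =>
    intro x y hle h
    rw [pow_succ_apply]
    rw [← Finset.sum_filter_add_sum_filter_not univ (fun c => x c ≠ y c)]
    have h1 : ∀ c ∈ univ.filter (fun c => x c ≠ y c),
        ((SimpleGraph.adjMatrix ℕ (hypercube N)) ^ (m + 2)) (flip x c) y
          = m.factorial * V N m := by
      intro c hc
      have hc' : x c ≠ y c := by simpa using hc
      have := dist_flip_mem x y hc'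
      exact ih _ _ (by omega) (by omega)
    have h2 : ∀ c ∈ univ.filter (fun c => ¬ x c ≠ y c),
        ((SimpleGraph.adjMatrix ℕ (hypercube N)) ^ (m + 2)) (flip x c) y
          = (m + 2).factorial := by
      intro c hc
      have hc' : x c = y c := by simpa using hc
      refine L1 _ _ _ ?_
      rw [dist_flip_not_mem x y hc', h]
    rw [Finset.sum_congr rfl h1, Finset.sum_congr rfl h2]
    rw [Finset.sum_const, Finset.sum_const]
    rw [← hd_card, h, card_not_filter, h, V_succ]
    have e2 : (m + 2).factorial = (m + 2) * ((m + 1) * m.factorial) := by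
      rw [Nat.factorial_succ, Nat.factorial_succ]
    rw [e2, Nat.factorial_succ]
    simp only [smul_eq_mul]
    ring

lemma V_lb : ∀ m : ℕ, m + 2 ≤ N → (m + 2) * (m + 1) ≤ V N m := by
  intro m
  induction m with
  | zero => intro h; simp [V]; omega
  | succ m ih =>
    intro h
    rw [V_succ]
    have h1 := ih (by omega)
    have h2 : 2 ≤ N - (m + 1) := by omega
    nlinarith

lemma sum_eq (m : ℕ) :
    ∑ k ∈ Finset.range (m + 1),
        Nat.choose m k * Nat.factorial k * (N - (m - k)) * Nat.factorial (m + 1 - k)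
      = m.factorial * V N m := by
  rw [V, Finset.mul_sum]
  refine Finset.sum_congr rfl fun k hk => ?_
  have hk' : k ≤ m := by simpa [Nat.lt_succ_iff] using hk
  have e1 : m + 1 - k = (m - k) + 1 := by omega
  rw [e1, Nat.factorial_succ]
  have e2 : Nat.choose m k * Nat.factorial k * Nat.factorial (m - k) = m.factorial :=
    Nat.choose_mul_factorial_mul_factorial hk'
  calc Nat.choose m k * Nat.factorial k * (N - (m - k)) * ((m - k + 1) * Nat.factorial (m - k))
      = (Nat.choose m k * Nat.factorial k * Nat.factorial (m - k)) * ((m - k + 1) * (N - (m - k))) := by ring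
    _ = m.factorial * ((m - k + 1) * (N - (m - k))) := by rw [e2]

end HCaux

/-- For `2 ≤ i ≤ N` and vertices `x, y` of the hypercube `H_N` at Hamming
distance `i − 2`, the number of walks of length `i` from `x` to `y` (the
`(x,y)` entry of `A_N^i`) equals
`Σ_{k=0}^{i−2} C(i−2,k)·k!·(N−(i−2−k))·(i−k−1)!`, and this quantity is at
least `i!`. -/
theorem stmt15 (N : ℕ) (hN : 2 ≤ N) (i : ℕ) (hi2 : 2 ≤ i) (hiN : i ≤ N)
    (x y : Fin N → Bool) (hxy : hammingDist x y = i - 2) :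
    ((SimpleGraph.adjMatrix ℕ (hypercube N)) ^ i) x y =
      ∑ k ∈ Finset.range (i - 1),
        Nat.choose (i - 2) k * Nat.factorial k * (N - (i - 2 - k)) *
          Nat.factorial (i - k - 1) ∧
    Nat.factorial i ≤ ((SimpleGraph.adjMatrix ℕ (hypercube N)) ^ i) x y := by
  obtain ⟨m, rfl⟩ : ∃ m, i = m + 2 := ⟨i - 2, by omega⟩
  have h2 : m + 2 - 2 = m := by omega
  have h1 : m + 2 - 1 = m + 1 := by omega
  rw [h2] at hxy
  have key := HCaux.main_eq m x y hiN hxy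
  constructor
  · rw [key, h2, h1, ← HCaux.sum_eq m]
    refine Finset.sum_congr rfl fun k _ => ?_
    have e : m + 2 - k - 1 = m + 1 - k := by omega
    rw [e]
  · rw [key]
    have hv := HCaux.V_lb (N := N) m hiN
    calc Nat.factorial (m + 2) = ((m + 2) * (m + 1)) * m.factorial := by
          rw [Nat.factorial_succ, Nat.factorial_succ]; ring
      _ ≤ HCaux.V N m * m.factorial := Nat.mul_le_mul_right _ hv
      _ = m.factorial * HCaux.V N m := Nat.mul_comm _ _
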